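/- Let T(n,k) be as in OEIS A256193 (partitions of n with exactly k parts of a second type). For fixed k ∈ ℕ and d ≥ 2k, T(d+k, d) = Σ_{i=1}^{k} (−1)^{i+1} · C(k, i) · T(d+k−i, d−i) + 1. -/

import Mathlib

open Finset

/-- `T(n,k)` (OEIS A256193): the number of partitions of `n` with exactly `k`
parts of a second type (primed), recorded as weakly decreasing sequences of
(part, primed?) pairs so that the arrangement of primed/unprimed copies within
a run of equal parts matters. -/
noncomputable def Tpart (n k : ℕ) : ℕ :=
  Set.ncard {l : List (ℕ × Bool) |
    l.Pairwise (fun a b => b.1 ≤ a.1) ∧ (∀ p ∈ l, 1 ≤ p.1) ∧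
      (l.map Prod.fst).sum = n ∧ (l.filter fun p => p.2).length = k}




lemma count_true_ofFn {l : ℕ} (f : Fin l → Bool) :
    (List.ofFn f).count true = (univ.filter fun i => f i = true).card := by
  simp [List.ofFn_eq_map, List.count, List.countP_map, Fin.univ_def, Finset.filter,
    Finset.card, List.countP_eq_length_filter, Function.comp, List.filter_map]
  rfl

lemma count_vector {l : ℕ} (v : List.Vector Bool l) :
    v.1.count true = (univ.filter fun i => v.get i = true).card := by
  conv_lhs => rw [← v.ofFn_get]
  rw [show (List.Vector.ofFn v.get).1 = List.ofFn v.get from List.Vector.toList_ofFn _,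
    count_true_ofFn]

def boolFinsetEquiv (l k : ℕ) :
    {b : List Bool // b.length = l ∧ b.count true = k} ≃ {s : Finset (Fin l) // s.card = k} :=
  ((Equiv.subtypeSubtypeEquivSubtypeInter (fun b : List Bool => b.length = l)
        (fun b => b.count true = k)).symm.trans
    ((Equiv.vectorEquivFin Bool l).subtypeEquiv
      (p := fun v : List.Vector Bool l => v.1.count true = k)
      (q := fun f : Fin l → Bool => (univ.filter fun i => f i = true).card = k)
      (fun v : List.Vector Bool l => by beta_reduce; rw [count_vector v]; rfl))).trans
    { toFun := fun f => ⟨univ.filter (fun i => f.1 i = true), f.2⟩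
      invFun := fun s => ⟨fun i => i ∈ s.1, by simpa using s.2⟩
      left_inv := fun f => by ext i; simp
      right_inv := fun s => by ext i; simp }

noncomputable instance instFB (l k : ℕ) :
    Fintype {b : List Bool // b.length = l ∧ b.count true = k} :=
  Fintype.ofEquiv _ (boolFinsetEquiv l k).symm

lemma card_bool_lists (l k : ℕ) :
    Fintype.card {b : List Bool // b.length = l ∧ b.count true = k} = l.choose k := by
  rw [Fintype.card_congr (boolFinsetEquiv l k)]
  simpa using Fintype.card_finset_len (α := Fin l) k

lemma count_snd (l : List (ℕ × Bool)) :
    (l.filter fun p => p.2).length = (l.map Prod.snd).count true := by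
  simp only [List.count, List.countP_map, List.countP_eq_length_filter, List.filter_map,
    List.length_map]
  congr 1
  apply List.filter_congr
  intro p _
  simp [Function.comp]

def bigEquiv (n k : ℕ) :
    {l : List (ℕ × Bool) |
      l.Pairwise (fun a b => b.1 ≤ a.1) ∧ (∀ p ∈ l, 1 ≤ p.1) ∧
        (l.map Prod.fst).sum = n ∧ (l.filter fun p => p.2).length = k} ≃
    {q : n.Partition × List Bool //
      q.2.length = Multiset.card q.1.parts ∧ q.2.count true = k} where
  toFun := fun ⟨l, hl⟩ =>
    ⟨(⟨(l.map Prod.fst : List ℕ), by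
        intro i hi
        simp only [Multiset.mem_coe, List.mem_map] at hi
        obtain ⟨p, hp, rfl⟩ := hi
        exact hl.2.1 p hp, by
        simpa using hl.2.2.1⟩, l.map Prod.snd), by
      refine ⟨by simp, ?_⟩
      rw [← count_snd]
      exact hl.2.2.2⟩
  invFun := fun ⟨(P, b), h⟩ =>
    ⟨(P.parts.sort (· ≥ ·)).zip b, by
      have hlen : (P.parts.sort (· ≥ ·)).length = b.length := by
        simp [Multiset.length_sort, h.1]
      have hfst : ((P.parts.sort (· ≥ ·)).zip b).map Prod.fst = P.parts.sort (· ≥ ·) :=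
        List.map_fst_zip (le_of_eq hlen)
      have hsnd : ((P.parts.sort (· ≥ ·)).zip b).map Prod.snd = b :=
        List.map_snd_zip (ge_of_eq hlen)
      have hsum : (P.parts.sort (· ≥ ·)).sum = P.parts.sum := by
        have := congrArg Multiset.sum (Multiset.sort_eq (α := ℕ) P.parts (· ≥ ·))
        rwa [Multiset.sum_coe] at this
      refine ⟨?_, ?_, ?_, ?_⟩
      · have : (((P.parts.sort (· ≥ ·)).zip b).map Prod.fst).Pairwise (· ≥ ·) := by
          rw [hfst]; exact Multiset.pairwise_sort _ _
        rw [List.pairwise_map] at this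
        exact this
      · rintro ⟨a, c⟩ hp
        have : a ∈ P.parts.sort (· ≥ ·) := (List.of_mem_zip hp).1
        exact P.parts_pos (Multiset.mem_sort _ |>.mp this)
      · rw [hfst, hsum, P.parts_sum]
      · rw [count_snd, hsnd, h.2]⟩
  left_inv := fun ⟨l, hl⟩ => by
    apply Subtype.ext
    have hsorted : (l.map Prod.fst).Pairwise (· ≥ ·) := by
      rw [List.pairwise_map]; exact hl.1
    have h1 : (((l.map Prod.fst : List ℕ) : Multiset ℕ)).sort (· ≥ ·) = l.map Prod.fst :=
      List.Perm.eq_of_pairwise' (Multiset.pairwise_sort _ _) hsorted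
        (Multiset.coe_eq_coe.mp (Multiset.sort_eq _ _))
    simp only [h1, List.zip_map']
    simp
  right_inv := fun ⟨(P, b), h⟩ => by
    apply Subtype.ext
    have hlen : (P.parts.sort (· ≥ ·)).length = b.length := by
      simp [Multiset.length_sort, h.1]
    have hfst : ((P.parts.sort (· ≥ ·)).zip b).map Prod.fst = P.parts.sort (· ≥ ·) :=
      List.map_fst_zip (le_of_eq hlen)
    have hsnd : ((P.parts.sort (· ≥ ·)).zip b).map Prod.snd = b :=
      List.map_snd_zip (ge_of_eq hlen)
    refine Prod.ext ?_ ?_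
    · apply Nat.Partition.ext
      simp only [hfst]
      exact Multiset.sort_eq _ _
    · simpa using hsnd

lemma Tpart_eq (n k : ℕ) :
    Tpart n k = ∑ P : n.Partition, (Multiset.card P.parts).choose k := by
  rw [Tpart, ← Nat.card_coe_set_eq,
    Nat.card_congr ((bigEquiv n k).trans
      (Equiv.subtypeProdEquivSigmaSubtype fun (P : n.Partition) (b : List Bool) =>
        b.length = Multiset.card P.parts ∧ b.count true = k)),
    Nat.card_eq_fintype_card, Fintype.card_sigma]
  exact Finset.sum_congr rfl fun P _ => card_bool_lists _ _


lemma msum_card_le (s : Multiset ℕ) (h : ∀ x ∈ s, 1 ≤ x) : Multiset.card s ≤ s.sum := by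
  induction s using Multiset.induction_on with
  | empty => simp
  | cons a s ih =>
    simp only [Multiset.card_cons, Multiset.sum_cons]
    have h1 := h a (Multiset.mem_cons_self a s)
    have h2 := ih fun x hx => h x (Multiset.mem_cons_of_mem hx)
    omega

lemma msum_map_pred (s : Multiset ℕ) (h : ∀ x ∈ s, 1 ≤ x) :
    (s.map (· - 1)).sum = s.sum - Multiset.card s := by
  induction s using Multiset.induction_on with
  | empty => simp
  | cons a s ih =>
    simp only [Multiset.map_cons, Multiset.sum_cons, Multiset.card_cons]
    have h1 := h a (Multiset.mem_cons_self a s)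
    have h2 := ih fun x hx => h x (Multiset.mem_cons_of_mem hx)
    have h3 := msum_card_le s fun x hx => h x (Multiset.mem_cons_of_mem hx)
    omega

def lengthEquiv (m l : ℕ) (h1 : l ≤ m) (h2 : m ≤ 2 * l) :
    {P : Nat.Partition m // Multiset.card P.parts = l} ≃ Nat.Partition (m - l) where
  toFun := fun ⟨P, hP⟩ =>
    ⟨(P.parts.map (· - 1)).filter (· ≠ 0), fun hi => by
      have := Multiset.of_mem_filter hi
      omega, by
      have hsplit := Multiset.filter_add_not (· ≠ 0) (P.parts.map (· - 1))
      have hz : ((P.parts.map (· - 1)).filter (fun a => ¬ a ≠ 0)).sum = 0 := by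
        apply Multiset.sum_eq_zero
        intro x hx
        have := Multiset.of_mem_filter hx
        omega
      have hmsum : ((P.parts.map (· - 1)).filter (· ≠ 0)).sum
            + ((P.parts.map (· - 1)).filter (fun a => ¬ a ≠ 0)).sum
          = (P.parts.map (· - 1)).sum := by
        rw [← Multiset.sum_add, hsplit]
      rw [msum_map_pred _ (fun x hx => P.parts_pos hx), P.parts_sum, hP] at hmsum
      omega⟩
  invFun := fun Q =>
    ⟨⟨Q.parts.map (· + 1) + Multiset.replicate (l - Multiset.card Q.parts) 1, fun hi => by
      rcases Multiset.mem_add.mp hi with h | h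
      · obtain ⟨x, _, rfl⟩ := Multiset.mem_map.mp h
        omega
      · rw [Multiset.eq_of_mem_replicate h]; omega, by
      have hc : Multiset.card Q.parts ≤ m - l := by
        have := msum_card_le Q.parts fun x hx => Q.parts_pos hx
        rw [Q.parts_sum] at this; exact this
      have hsum1 : ∀ t : Multiset ℕ, (t.map (· + 1)).sum = t.sum + Multiset.card t := by
        intro t
        induction t using Multiset.induction_on with
        | empty => simp
        | cons a s ih =>
          simp only [Multiset.map_cons, Multiset.sum_cons, Multiset.card_cons, ih]
          omega
      rw [Multiset.sum_add, hsum1, Multiset.sum_replicate, Q.parts_sum, smul_eq_mul, mul_one]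
      omega⟩, by
      have hc : Multiset.card Q.parts ≤ m - l := by
        have := msum_card_le Q.parts fun x hx => Q.parts_pos hx
        rw [Q.parts_sum] at this; exact this
      simp only [Multiset.card_add, Multiset.card_map, Multiset.card_replicate]
      omega⟩
  left_inv := fun ⟨P, hP⟩ => by
    apply Subtype.ext
    apply Nat.Partition.ext
    simp only
    have hA : (P.parts.map (· - 1)).filter (· ≠ 0)
        = (P.parts.filter (· ≠ 1)).map (· - 1) := by
      rw [Multiset.filter_map]
      congr 1
      apply Multiset.filter_congr
      intro x hx
      have := P.parts_pos hx
      simp only [Function.comp]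
      omega
    rw [hA, Multiset.map_map, Multiset.card_map]
    have hmapid : ((P.parts.filter (· ≠ 1)).map ((· + 1) ∘ (· - 1))) = P.parts.filter (· ≠ 1) := by
      have : ∀ x ∈ P.parts.filter (· ≠ 1), ((· + 1) ∘ (· - 1)) x = x := by
        intro x hx
        have := P.parts_pos (Multiset.mem_of_mem_filter hx)
        simp only [Function.comp]
        omega
      rw [Multiset.map_congr rfl this, Multiset.map_id']
    rw [hmapid]
    have hsplit := Multiset.filter_add_not (· ≠ 1) P.parts
    have hcard : Multiset.card (P.parts.filter (· ≠ 1))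
        + Multiset.card (P.parts.filter (fun a => ¬ a ≠ 1)) = l := by
      rw [← Multiset.card_add, hsplit, hP]
    have hrep : P.parts.filter (fun a => ¬ a ≠ 1) = Multiset.replicate
        (Multiset.card (P.parts.filter (fun a => ¬ a ≠ 1))) 1 := by
      have : P.parts.filter (fun a => ¬ a ≠ 1) = P.parts.filter (· = 1) := by
        apply Multiset.filter_congr; intro x _; constructor <;> (intro; omega)
      rw [this, Multiset.filter_eq']
      simp [Multiset.card_replicate]
    rw [show l - Multiset.card (P.parts.filter (· ≠ 1))
        = Multiset.card (P.parts.filter (fun a => ¬ a ≠ 1)) by omega, ← hrep, hsplit]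
  right_inv := fun Q => by
    apply Nat.Partition.ext
    simp only
    rw [Multiset.map_add, Multiset.map_map, Multiset.map_replicate]
    have h1 : (Q.parts.map ((· - 1) ∘ (· + 1))) = Q.parts := by
      have : ∀ x ∈ Q.parts, ((· - 1) ∘ (· + 1)) x = x := by intro x _; simp
      rw [Multiset.map_congr rfl this, Multiset.map_id']
    rw [h1, Multiset.filter_add]
    have h2 : (Q.parts.filter (· ≠ 0)) = Q.parts :=
      Multiset.filter_eq_self.mpr fun a ha => by have := Q.parts_pos ha; omega
    have h3 : ((Multiset.replicate (l - Multiset.card Q.parts) (1 - 1) : Multiset ℕ).filter (· ≠ 0))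
        = 0 :=
      Multiset.filter_eq_nil.mpr fun a ha => by rw [Multiset.eq_of_mem_replicate ha]; simp
    rw [h2, h3, add_zero]

lemma card_parts_eq (m l : ℕ) (h1 : l ≤ m) (h2 : m ≤ 2 * l) :
    (univ.filter fun P : Nat.Partition m => Multiset.card P.parts = l).card
      = Fintype.card (Nat.Partition (m - l)) := by
  rw [← Fintype.card_subtype]
  exact Fintype.card_congr (lengthEquiv m l h1 h2)


lemma alt_binom : ∀ k M s : ℕ, k ≤ M → s ≤ k →
    ∑ i ∈ range (k + 1), (-1 : ℤ) ^ i * (k.choose i : ℤ) * ((M - i).choose s : ℤ)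
      = if s = k then 1 else 0 := by
  intro k
  induction k with
  | zero =>
    intro M s _ hs
    interval_cases s
    simp
  | succ k ih =>
    intro M s hM hs
    rcases s with _ | s
    · -- s = 0
      have h0 : ∑ i ∈ range (k + 1 + 1), (-1 : ℤ) ^ i * ((k+1).choose i : ℤ)
            * (((M - i).choose 0 : ℕ) : ℤ)
          = ∑ i ∈ range (k + 1 + 1), (-1 : ℤ) ^ i * ((k+1).choose i : ℤ) := by
        apply Finset.sum_congr rfl
        intro i _
        simp [Nat.choose_zero_right]
      rw [h0, Int.alternating_sum_range_choose_of_ne (Nat.succ_ne_zero k)]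
      simp [Nat.succ_ne_zero]
    · -- s = s + 1
      have step1 : ∑ i ∈ range (k + 1 + 1), (-1 : ℤ) ^ i * ((k+1).choose i : ℤ)
            * ((M - i).choose (s+1) : ℤ)
          = (∑ i ∈ range (k + 1), (-1 : ℤ) ^ i * (k.choose i : ℤ) * ((M - i).choose (s+1) : ℤ))
            - (∑ i ∈ range (k + 1), (-1 : ℤ) ^ i * (k.choose i : ℤ)
                * ((M - 1 - i).choose (s+1) : ℤ)) := by
        rw [Finset.sum_range_succ' (fun i => (-1 : ℤ) ^ i * ((k+1).choose i : ℤ)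
            * ((M - i).choose (s+1) : ℤ)) (k+1)]
        have expand : ∀ i ∈ range (k + 1),
            (-1 : ℤ) ^ (i+1) * ((k+1).choose (i+1) : ℤ) * ((M - (i+1)).choose (s+1) : ℤ)
              = -((-1 : ℤ) ^ i * (k.choose i : ℤ) * ((M - 1 - i).choose (s+1) : ℤ))
                + -((-1 : ℤ) ^ i * (k.choose (i+1) : ℤ) * ((M - 1 - i).choose (s+1) : ℤ)) := by
          intro i _
          rw [Nat.choose_succ_succ' k i, show M - (i+1) = M - 1 - i by omega]
          push_cast
          ring
        rw [Finset.sum_congr rfl expand, Finset.sum_add_distrib]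
        -- now handle the second sum: ∑ -(...choose (i+1)...)
        have hB : ∑ i ∈ range (k + 1),
              -((-1 : ℤ) ^ i * (k.choose (i+1) : ℤ) * ((M - 1 - i).choose (s+1) : ℤ))
            = (∑ i ∈ range (k + 1), (-1 : ℤ) ^ i * (k.choose i : ℤ) * ((M - i).choose (s+1) : ℤ))
              - ((M).choose (s+1) : ℤ) := by
          rw [Finset.sum_range_succ' (fun i => (-1 : ℤ) ^ i * (k.choose i : ℤ)
              * ((M - i).choose (s+1) : ℤ)) k]
          have : ∀ i ∈ range k,
              (-1 : ℤ) ^ (i+1) * (k.choose (i+1) : ℤ) * ((M - (i+1)).choose (s+1) : ℤ)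
                = -((-1 : ℤ) ^ i * (k.choose (i+1) : ℤ) * ((M - 1 - i).choose (s+1) : ℤ)) := by
            intro i _
            rw [show M - (i+1) = M - 1 - i by omega]
            push_cast
            ring
          rw [Finset.sum_congr rfl this]
          rw [Finset.sum_range_succ (fun i =>
              -((-1 : ℤ) ^ i * (k.choose (i+1) : ℤ) * ((M - 1 - i).choose (s+1) : ℤ))) k]
          simp only [Nat.choose_succ_self, Nat.sub_zero, Nat.choose_zero_right, Nat.cast_zero,
            Nat.cast_one, pow_zero]
          ring
        rw [hB]
        simp only [Finset.sum_neg_distrib, Nat.sub_zero, Nat.choose_zero_right, Nat.cast_one,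
          pow_zero]
        ring
      have step2 : (∑ i ∈ range (k + 1), (-1 : ℤ) ^ i * (k.choose i : ℤ)
              * ((M - i).choose (s+1) : ℤ))
            - (∑ i ∈ range (k + 1), (-1 : ℤ) ^ i * (k.choose i : ℤ)
                * ((M - 1 - i).choose (s+1) : ℤ))
          = ∑ i ∈ range (k + 1), (-1 : ℤ) ^ i * (k.choose i : ℤ)
              * (((M - 1) - i).choose s : ℤ) := by
        rw [← Finset.sum_sub_distrib]
        apply Finset.sum_congr rfl
        intro i hi
        have hik : i ≤ k := by simpa [Nat.lt_succ_iff] using hi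
        have hMi : M - i = (M - 1 - i) + 1 := by omega
        rw [hMi, Nat.choose_succ_succ' (M - 1 - i) s, show M - 1 - i = (M-1) - i by omega]
        push_cast
        ring
      rw [step1, step2, ih (M - 1) s (by omega) (by omega)]
      by_cases hsk : s = k
      · simp [hsk]
      · simp [hsk, fun h : s + 1 = k + 1 => hsk (by omega)]


lemma Tpart_formula (m r : ℕ) (h1 : r ≤ m) (h2 : m ≤ 2 * r) :
    Tpart m r = ∑ j ∈ range (m - r + 1),
      Fintype.card (Nat.Partition j) * (m - j).choose r := by
  rw [Tpart_eq]
  have hmaps : ∀ P : Nat.Partition m, P ∈ univ → Multiset.card P.parts ∈ range (m + 1) := by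
    intro P _
    have := msum_card_le P.parts fun x hx => P.parts_pos hx
    rw [P.parts_sum] at this
    simp [Nat.lt_succ_iff, this]
  rw [← Finset.sum_fiberwise_of_maps_to hmaps (fun P => (Multiset.card P.parts).choose r)]
  have inner : ∀ l ∈ range (m + 1),
      (∑ P ∈ univ.filter (fun P : Nat.Partition m => Multiset.card P.parts = l),
        (Multiset.card P.parts).choose r)
      = (univ.filter fun P : Nat.Partition m => Multiset.card P.parts = l).card
          * l.choose r := by
    intro l _
    rw [Finset.sum_congr rfl (fun P hP => by
      rw [(Finset.mem_filter.mp hP).2]), Finset.sum_const, smul_eq_mul]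
  rw [Finset.sum_congr rfl inner]
  rw [show (range (m+1)) = (range (m+1)) from rfl]
  -- drop terms with l < r
  have hsub : Icc r m ⊆ range (m + 1) := by
    intro x hx
    simp only [mem_Icc] at hx
    simp [Nat.lt_succ_iff, hx.2]
  rw [← Finset.sum_subset hsub (fun x hx hnx => by
    have : x < r := by
      simp only [mem_range, Nat.lt_succ_iff] at hx
      simp only [mem_Icc, not_and, not_le] at hnx
      omega
    rw [Nat.choose_eq_zero_of_lt this, Nat.mul_zero])]
  -- rewrite counts and reindex
  rw [Finset.sum_congr rfl (fun l hl => by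
    have hlm : l ≤ m := (mem_Icc.mp hl).2
    have hrl : r ≤ l := (mem_Icc.mp hl).1
    rw [card_parts_eq m l hlm (by omega)])]
  apply Finset.sum_nbij' (i := fun l => m - l) (j := fun j => m - j)
  · intro l hl
    simp only [mem_Icc] at hl
    simp only [mem_range]
    omega
  · intro j hj
    simp only [mem_range] at hj
    simp only [mem_Icc]
    omega
  · intro l hl
    simp only [mem_Icc] at hl
    omega
  · intro j hj
    simp only [mem_range] at hj
    omega
  · intro l hl
    simp only [mem_Icc] at hl
    rw [show m - (m - l) = l by omega]


/-- For fixed `k` and `d ≥ 2k`,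
`T(d+k,d) = Σ_{i=1}^{k} (-1)^{i+1} C(k,i) T(d+k-i, d-i) + 1`. -/
theorem Tpart_alternating (k d : ℕ) (h : 2 * k ≤ d) :
    (Tpart (d + k) d : ℤ) =
      (∑ i ∈ Finset.Icc 1 k,
        (-1) ^ (i + 1) * (Nat.choose k i : ℤ) * Tpart (d + k - i) (d - i)) + 1 := by
  have key : ∑ i ∈ range (k + 1),
      (-1 : ℤ) ^ i * (k.choose i : ℤ) * (Tpart (d + k - i) (d - i) : ℤ) = 1 := by
    have expand : ∀ i ∈ range (k + 1),
        (-1 : ℤ) ^ i * (k.choose i : ℤ) * (Tpart (d + k - i) (d - i) : ℤ)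
          = ∑ j ∈ range (k + 1), (Fintype.card (Nat.Partition j) : ℤ)
              * ((-1 : ℤ) ^ i * (k.choose i : ℤ) * ((d + k - j - i).choose (k - j) : ℤ)) := by
      intro i hi
      have hik : i ≤ k := by simpa [Nat.lt_succ_iff] using hi
      have h1 : d - i ≤ d + k - i := by omega
      have h2 : d + k - i ≤ 2 * (d - i) := by omega
      rw [Tpart_formula (d + k - i) (d - i) h1 h2]
      rw [show d + k - i - (d - i) = k by omega]
      rw [Nat.cast_sum]
      rw [Finset.mul_sum]
      apply Finset.sum_congr rfl
      intro j hj
      have hjk : j ≤ k := by simpa [Nat.lt_succ_iff] using hj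
      have hch : (d + k - i - j).choose (d - i) = (d + k - j - i).choose (k - j) := by
        have hle : d - i ≤ d + k - i - j := by omega
        have := Nat.choose_symm hle
        rw [show d + k - i - j - (d - i) = k - j by omega] at this
        rw [show d + k - j - i = d + k - i - j by omega, ← this]
      rw [hch]
      push_cast
      ring
    rw [Finset.sum_congr rfl expand, Finset.sum_comm]
    have inner : ∀ j ∈ range (k + 1),
        (∑ i ∈ range (k + 1), (Fintype.card (Nat.Partition j) : ℤ)
            * ((-1 : ℤ) ^ i * (k.choose i : ℤ) * ((d + k - j - i).choose (k - j) : ℤ)))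
          = (Fintype.card (Nat.Partition j) : ℤ) * (if k - j = k then 1 else 0) := by
      intro j hj
      have hjk : j ≤ k := by simpa [Nat.lt_succ_iff] using hj
      rw [← Finset.mul_sum, alt_binom k (d + k - j) (k - j) (by omega) (by omega)]
    rw [Finset.sum_congr rfl inner]
    rw [Finset.sum_eq_single 0]
    · simp
    · intro j hj hj0
      have hjk : j ≤ k := by simpa [Nat.lt_succ_iff] using hj
      have : ¬ (k - j = k) := by omega
      simp [this]
    · intro habs
      simp at habs
  -- rearrange
  have hsplit : range (k + 1) = insert 0 (Icc 1 k) := by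
    ext x
    simp [Nat.lt_succ_iff]
    omega
  rw [hsplit, Finset.sum_insert (by simp)] at key
  simp only [pow_zero, Nat.choose_zero_right, Nat.cast_one, one_mul, Nat.sub_zero,
    Nat.add_sub_cancel] at key
  have hneg : ∑ i ∈ Icc 1 k, (-1 : ℤ) ^ (i + 1) * (k.choose i : ℤ)
        * (Tpart (d + k - i) (d - i) : ℤ)
      = -∑ i ∈ Icc 1 k, (-1 : ℤ) ^ i * (k.choose i : ℤ)
        * (Tpart (d + k - i) (d - i) : ℤ) := by
    rw [← Finset.sum_neg_distrib]
    apply Finset.sum_congr rfl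
    intro i _
    ring
  rw [hneg]
  linarith [key]
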